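/- (Robustness in model M2.) Suppose δ^D(x) ≠ 0 for every x ∈ 𝒳, and let δ*, pY*, pD* : 𝒳 → ℝ be arbitrary functions (possibly misspecified). Then Φ(f, δ*, δ^D, pY*, pD*) = Δ, where f is the true conditional instrument density and δ^D is the true conditional treatment difference. -/

import Mathlib

open MeasureTheory

/-- Conditional mean of `W` given event `A`: `E[W | A] = (∫_A W dμ) / μ(A)`. -/
noncomputable def condMean {Ω : Type*} [MeasurableSpace Ω] (μ : Measure Ω)
    (W : Ω → ℝ) (A : Set Ω) : ℝ :=
  (∫ ω in A, W ω ∂μ) / (μ A).toReal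

/-- The multiply robust functional
`Φ(f*, δ*, δD*, pY*, pD*) = E[ ((2Z−1)/f*(Z,X)) (1/δD*(X))
  (Y − pY*(X) − D δ*(X) + pD*(X) δ*(X)) + δ*(X) ]`. -/
noncomputable def mrFunctional {Ω 𝒳 : Type*} [MeasurableSpace Ω] (μ : Measure Ω)
    (Z D Y : Ω → ℝ) (X : Ω → 𝒳)
    (fs : ℝ → 𝒳 → ℝ) (δs δDs pYs pDs : 𝒳 → ℝ) : ℝ :=
  ∫ ω, ((2 * Z ω - 1) / fs (Z ω) (X ω)) * (1 / δDs (X ω)) *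
      (Y ω - pYs (X ω) - D ω * δs (X ω) + pDs (X ω) * δs (X ω)) + δs (X ω) ∂μ

/-- robustness in model `M2`: with the true instrument density `f`
and the true conditional treatment difference `δ^D`, but arbitrary (possibly
misspecified) `δ*, pY*, pD*`, the multiply robust functional recovers the average
Wald estimand: `Φ(f, δ*, δ^D, pY*, pD*) = Δ`. -/
theorem mr_robust_M2
    {Ω : Type*} [MeasurableSpace Ω] (μ : Measure Ω) [IsProbabilityMeasure μ]
    {𝒳 : Type*} [Fintype 𝒳] [MeasurableSpace 𝒳] [MeasurableSingletonClass 𝒳]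
    (Z D Y : Ω → ℝ) (X : Ω → 𝒳)
    (hZmeas : Measurable Z) (hDmeas : Measurable D) (hXmeas : Measurable X)
    (hYmeas : Measurable Y)
    (hZ01 : ∀ ω, Z ω = 0 ∨ Z ω = 1) (hD01 : ∀ ω, D ω = 0 ∨ D ω = 1)
    (hYint : Integrable Y μ)
    -- positivity
    (hPos : ∀ (z : ℝ), (z = 0 ∨ z = 1) → ∀ (x : 𝒳),
      0 < μ ({ω | Z ω = z} ∩ {ω | X ω = x}))
    -- f(z | x) = μ(Z = z | X = x)
    (f : ℝ → 𝒳 → ℝ)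
    (hf : ∀ (z : ℝ) (x : 𝒳),
      f z x = (μ ({ω | Z ω = z} ∩ {ω | X ω = x})).toReal / (μ {ω | X ω = x}).toReal)
    -- p_z^Y, p_z^D, δ^Y, δ^D, and the conditional Wald estimand δ
    (pY pD : ℝ → 𝒳 → ℝ)
    (hpY : ∀ (z : ℝ) (x : 𝒳),
      pY z x = condMean μ Y ({ω | Z ω = z} ∩ {ω | X ω = x}))
    (hpD : ∀ (z : ℝ) (x : 𝒳),
      pD z x = condMean μ D ({ω | Z ω = z} ∩ {ω | X ω = x}))
    (δY δD δ : 𝒳 → ℝ)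
    (hδY : ∀ x, δY x = pY 1 x - pY 0 x)
    (hδD : ∀ x, δD x = pD 1 x - pD 0 x)
    (hδDne : ∀ x, δD x ≠ 0)
    (hδ : ∀ x, δ x = δY x / δD x)
    -- the average Wald estimand
    (Δ : ℝ) (hΔ : Δ = ∑ x : 𝒳, (μ {ω | X ω = x}).toReal * δ x)
    -- arbitrary candidate nuisance functions
    (δs pYs pDs : 𝒳 → ℝ) :
    mrFunctional μ Z D Y X f δs δD pYs pDs = Δ := by
  classical
  have hDint : Integrable D μ := by
    refine (integrable_const (1:ℝ)).mono' hDmeas.aestronglyMeasurable ?_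
    filter_upwards with ω
    rcases hD01 ω with h | h <;> simp [h]
  set A : ℝ → 𝒳 → Set Ω := fun z x => {ω | Z ω = z} ∩ {ω | X ω = x} with hA
  have hAmeas : ∀ z x, MeasurableSet (A z x) := fun z x =>
    (hZmeas (measurableSet_singleton z)).inter (hXmeas (measurableSet_singleton x))
  set g : Ω → ℝ := fun ω => ((2 * Z ω - 1) / f (Z ω) (X ω)) * (1 / δD (X ω)) *
      (Y ω - pYs (X ω) - D ω * δs (X ω) + pDs (X ω) * δs (X ω)) + δs (X ω) with hgdef
  have hApos : ∀ z, (z = 0 ∨ z = 1) → ∀ x, 0 < (μ (A z x)).toReal := fun z hz x =>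
    ENNReal.toReal_pos (hPos z hz x).ne' (measure_ne_top μ _)
  have hXpos : ∀ x, 0 < (μ {ω | X ω = x}).toReal := by
    intro x
    have h1 : μ (A 1 x) ≤ μ {ω | X ω = x} := measure_mono Set.inter_subset_right
    exact ENNReal.toReal_pos (lt_of_lt_of_le (hPos 1 (Or.inr rfl) x) h1).ne'
      (measure_ne_top μ _)
  have hAval : ∀ z x, (μ (A z x)).toReal = f z x * (μ {ω | X ω = x}).toReal := by
    intro z x
    rw [hf, div_mul_cancel₀ _ (hXpos x).ne']
  have hfpos : ∀ z, (z = 0 ∨ z = 1) → ∀ x, 0 < f z x := by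
    intro z hz x
    rw [hf]
    exact div_pos (hApos z hz x) (hXpos x)
  -- on each atom, `g` agrees with an affine function of `(Y, D)`
  have hEq : ∀ (z : ℝ) (x : 𝒳), Set.EqOn g (fun ω =>
      ((2 * z - 1) / f z x * (1 / δD x)) * Y ω +
        ((((2 * z - 1) / f z x * (1 / δD x)) * (-δs x)) * D ω +
          (((2 * z - 1) / f z x * (1 / δD x)) * (-pYs x + pDs x * δs x) + δs x))) (A z x) := by
    intro z x ω hω
    obtain ⟨hz, hx⟩ := hω
    simp only [Set.mem_setOf_eq] at hz hx
    simp only [hgdef, hz, hx]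
    ring
  have haff : ∀ (a b c : ℝ) (s : Set Ω),
      IntegrableOn (fun ω => a * Y ω + (b * D ω + c)) s μ := fun a b c s =>
    ((hYint.const_mul a).add ((hDint.const_mul b).add (integrable_const c))).integrableOn
  have hint : ∀ z x, IntegrableOn g (A z x) μ := fun z x =>
    (haff _ _ _ _).congr_fun (hEq z x).symm (hAmeas z x)
  -- evaluate the integral of `g` on each atom
  have hYA : ∀ z, (z = 0 ∨ z = 1) → ∀ x,
      ∫ ω in A z x, Y ω ∂μ = pY z x * (μ (A z x)).toReal := by
    intro z hz x
    rw [hpY]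
    unfold condMean
    rw [div_mul_cancel₀ _ (hApos z hz x).ne']
  have hDA : ∀ z, (z = 0 ∨ z = 1) → ∀ x,
      ∫ ω in A z x, D ω ∂μ = pD z x * (μ (A z x)).toReal := by
    intro z hz x
    rw [hpD]
    unfold condMean
    rw [div_mul_cancel₀ _ (hApos z hz x).ne']
  have hpiece : ∀ z, (z = 0 ∨ z = 1) → ∀ x, ∫ ω in A z x, g ω ∂μ =
      (2 * z - 1) * (1 / δD x) *
        (pY z x - pYs x - pD z x * δs x + pDs x * δs x) * (μ {ω | X ω = x}).toReal
      + δs x * (μ (A z x)).toReal := by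
    intro z hz x
    rw [setIntegral_congr_fun (hAmeas z x) (hEq z x)]
    have h1 : IntegrableOn (fun ω => ((2 * z - 1) / f z x * (1 / δD x)) * Y ω) (A z x) μ :=
      hYint.integrableOn.const_mul _
    have h2 : IntegrableOn (fun ω => ((2 * z - 1) / f z x * (1 / δD x) * -δs x) * D ω) (A z x) μ :=
      hDint.integrableOn.const_mul _
    have h3 : IntegrableOn
        (fun _ : Ω => (2 * z - 1) / f z x * (1 / δD x) * (-pYs x + pDs x * δs x) + δs x)
        (A z x) μ := integrableOn_const (measure_ne_top μ _)
    have h23 : IntegrableOn (fun ω => ((2 * z - 1) / f z x * (1 / δD x) * -δs x) * D ω +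
        ((2 * z - 1) / f z x * (1 / δD x) * (-pYs x + pDs x * δs x) + δs x)) (A z x) μ :=
      h2.add h3
    rw [integral_add h1 h23, integral_add h2 h3]
    rw [integral_const_mul, integral_const_mul, setIntegral_const, measureReal_def, hYA z hz x, hDA z hz x,
      smul_eq_mul, hAval z x]
    field_simp [(hfpos z hz x).ne', hδDne x]
    ring
  -- decompose the total integral over the atoms
  have hgint : mrFunctional μ Z D Y X f δs δD pYs pDs = ∫ ω, g ω ∂μ := rfl
  have hXsplit : ∀ x, {ω | X ω = x} = A 0 x ∪ A 1 x := by
    intro x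
    ext ω
    simp only [hA, Set.mem_union, Set.mem_inter_iff, Set.mem_setOf_eq]
    constructor
    · intro h
      rcases hZ01 ω with h0 | h1
      exacts [Or.inl ⟨h0, h⟩, Or.inr ⟨h1, h⟩]
    · rintro (⟨_, h⟩ | ⟨_, h⟩) <;> exact h
  have hdisj : ∀ x, Disjoint (A 0 x) (A 1 x) := by
    intro x
    rw [Set.disjoint_left]
    rintro ω ⟨h0, -⟩ ⟨h1, -⟩
    simp only [Set.mem_setOf_eq] at h0 h1
    exact one_ne_zero (h1.symm.trans h0)
  have hintX : ∀ x, IntegrableOn g {ω | X ω = x} μ := by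
    intro x
    rw [hXsplit x]
    exact (hint 0 x).union (hint 1 x)
  have hcover : (Set.univ : Set Ω) = ⋃ x : 𝒳, {ω | X ω = x} := by
    ext ω; simp
  rw [hgint, ← setIntegral_univ, hcover,
    integral_iUnion_fintype (s := fun x => {ω | X ω = x})
      (fun x => hXmeas (measurableSet_singleton x))
      (fun x y hxy => by
        rw [Function.onFun, Set.disjoint_left]
        rintro ω hx hy
        simp only [Set.mem_setOf_eq] at hx hy
        exact hxy (hx.symm.trans hy))
      hintX, hΔ]
  refine Finset.sum_congr rfl fun x _ => ?_
  have hXint : ∫ ω in {ω | X ω = x}, g ω ∂μ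
      = (∫ ω in A 0 x, g ω ∂μ) + ∫ ω in A 1 x, g ω ∂μ := by
    rw [hXsplit x]
    exact setIntegral_union (hdisj x) (hAmeas 1 x) (hint 0 x) (hint 1 x)
  rw [hXint, hpiece 0 (Or.inl rfl) x, hpiece 1 (Or.inr rfl) x]
  -- measure additivity on the fiber
  have hsumA : (μ (A 0 x)).toReal + (μ (A 1 x)).toReal = (μ {ω | X ω = x}).toReal := by
    rw [← ENNReal.toReal_add (measure_ne_top μ _) (measure_ne_top μ _),
      ← measure_union (hdisj x) (hAmeas 1 x), ← hXsplit x]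
  have hA1 : (μ (A 1 x)).toReal = (μ {ω | X ω = x}).toReal - (μ (A 0 x)).toReal := by
    linarith
  have hne : pD 1 x - pD 0 x ≠ 0 := by
    rw [← hδD x]; exact hδDne x
  rw [hA1, hδ x, hδY x, hδD x]
  field_simp [hne]
  ring
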